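/- Let r, α, κ, a, b be real numbers with r ≥ 0, α ≥ 0, κ ≥ 0, and b ≥ 0. Then the following are equivalent: (1) r + α ≤ a, 2α − κ ≤ b, and α ≤ κ; (2) there exist real numbers r', α', κ', β with β ≥ 0, r' ≥ 0, α' ≥ 0, κ' ≥ 0, β ≤ r', r = r' − β, α = α' + β, κ = κ' + 2β, r' + α' ≤ a, α' ≤ b, and α' ≤ κ'. -/
import Mathlib

/-- Fourier–Motzkin elimination step in the direct part of the
capacity-region characterization: for `r, α, κ ≥ 0` and `b ≥ 0`, the system
`r + α ≤ a`, `2α − κ ≤ b`, `α ≤ κ` is equivalent to the existence of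
`r', α', κ', β` with `β ≥ 0`, `r' ≥ 0`, `α' ≥ 0`, `κ' ≥ 0`, `β ≤ r'`,
`r = r' − β`, `α = α' + β`, `κ = κ' + 2β`, `r' + α' ≤ a`, `α' ≤ b`, `α' ≤ κ'`. -/
theorem statement17 (r α κ a b : ℝ)
    (hr : 0 ≤ r) (hα : 0 ≤ α) (hκ : 0 ≤ κ) (hb : 0 ≤ b) :
    (r + α ≤ a ∧ 2 * α - κ ≤ b ∧ α ≤ κ) ↔
    (∃ r' α' κ' β : ℝ, 0 ≤ β ∧ 0 ≤ r' ∧ 0 ≤ α' ∧ 0 ≤ κ' ∧ β ≤ r' ∧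
      r = r' - β ∧ α = α' + β ∧ κ = κ' + 2 * β ∧
      r' + α' ≤ a ∧ α' ≤ b ∧ α' ≤ κ') := by
  constructor
  · rintro ⟨h1, h2, h3⟩
    set β := max 0 (α - b) with hβdef
    have hβ0 : 0 ≤ β := le_max_left _ _
    have hβα : β ≤ α := max_le hα (by linarith)
    have hβκ : β ≤ κ - α := max_le (by linarith) (by linarith)
    exact ⟨r + β, α - β, κ - 2 * β, β, hβ0, by linarith, by linarith, by linarith,
      by linarith, by ring, by ring, by ring, by linarith,
      max_cases 0 (α - b) |>.elim (fun ⟨h, _⟩ => by rw [hβdef, h]; linarith)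
        (fun ⟨h, _⟩ => by rw [hβdef, h]; linarith), by linarith⟩
  · rintro ⟨r', α', κ', β, hβ0, hr', hα', hκ', hβr, rfl, rfl, rfl, h1, h2, h3⟩
    exact ⟨by linarith, by linarith, by linarith⟩
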